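/- Let λ, μ, η ∈ ℂ and let u ∈ ℂⁿ, v ∈ ℂ^{2n}, w ∈ ℂ² satisfy the linear three-parameter eigenvalue problem (ηL₂ + λL₁ + L₀ + μM)u = 0, (ηL̃₂ + λL̃₁ + L̃₀ + μM̃)v = 0, and (ηC₂ + λC₁ + C₀)w = 0. Then the vector z = u⊗v⊗w ∈ ℂ^{4n²} satisfies Δ₁ z = λΔ₀ z. -/

import Mathlib

open Matrix
open scoped Kronecker

namespace ZGV7

variable {n : ℕ}

/-- Kronecker product of two vectors: `(u ⊗ v)_{(i,j)} = u_i v_j`. -/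
def vecKron {m p : Type*} (u : m → ℂ) (v : p → ℂ) : m × p → ℂ :=
  fun x => u x.1 * v x.2

def Lt2 (L2 : Matrix (Fin n) (Fin n) ℂ) : Matrix (Fin n ⊕ Fin n) (Fin n ⊕ Fin n) ℂ :=
  Matrix.fromBlocks L2 0 0 L2

def Lt1 (L2 L1 : Matrix (Fin n) (Fin n) ℂ) : Matrix (Fin n ⊕ Fin n) (Fin n ⊕ Fin n) ℂ :=
  Matrix.fromBlocks L1 0 ((2 : ℂ) • L2) L1

def Lt0 (L1 L0 : Matrix (Fin n) (Fin n) ℂ) : Matrix (Fin n ⊕ Fin n) (Fin n ⊕ Fin n) ℂ :=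
  Matrix.fromBlocks L0 0 L1 L0

def Mt (M : Matrix (Fin n) (Fin n) ℂ) : Matrix (Fin n ⊕ Fin n) (Fin n ⊕ Fin n) ℂ :=
  Matrix.fromBlocks M 0 0 M

def C2 : Matrix (Fin 2) (Fin 2) ℂ := !![1, 0; 0, 0]
def C1 : Matrix (Fin 2) (Fin 2) ℂ := !![0, -1; -1, 0]
def C0 : Matrix (Fin 2) (Fin 2) ℂ := !![0, 0; 0, 1]

def Δ0 (L2 L1 L0 M : Matrix (Fin n) (Fin n) ℂ) :
    Matrix ((Fin n × (Fin n ⊕ Fin n)) × Fin 2) ((Fin n × (Fin n ⊕ Fin n)) × Fin 2) ℂ :=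
  L1 ⊗ₖ Mt M ⊗ₖ C2 + M ⊗ₖ Lt2 L2 ⊗ₖ C1 - M ⊗ₖ Lt1 L2 L1 ⊗ₖ C2 - L2 ⊗ₖ Mt M ⊗ₖ C1

def Δ1 (L2 L1 L0 M : Matrix (Fin n) (Fin n) ℂ) :
    Matrix ((Fin n × (Fin n ⊕ Fin n)) × Fin 2) ((Fin n × (Fin n ⊕ Fin n)) × Fin 2) ℂ :=
  L2 ⊗ₖ Mt M ⊗ₖ C0 - L0 ⊗ₖ Mt M ⊗ₖ C2 - M ⊗ₖ Lt2 L2 ⊗ₖ C0 + M ⊗ₖ Lt0 L1 L0 ⊗ₖ C2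


lemma kron_mulVec {m p m' p' : Type*} [Fintype m'] [Fintype p']
    (A : Matrix m m' ℂ) (B : Matrix p p' ℂ) (x : m' → ℂ) (y : p' → ℂ) :
    (A ⊗ₖ B) *ᵥ vecKron x y = vecKron (A *ᵥ x) (B *ᵥ y) := by
  ext ⟨i, j⟩
  simp only [Matrix.mulVec, dotProduct, vecKron, Matrix.kroneckerMap_apply,
    Fintype.sum_prod_type]
  rw [Finset.sum_mul_sum]
  apply Finset.sum_congr rfl
  intro p _
  apply Finset.sum_congr rfl
  intro q _
  ring

/-- If `(λ, μ, η)` with vectors `u, v, w` solves the linear three-parameter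
eigenvalue problem, then `z = u⊗v⊗w` satisfies `Δ₁ z = λ Δ₀ z`. -/
theorem decoupled_GEP_of_three_parameter_EVP
    (n : ℕ) (hn : 1 ≤ n) (L2 L1 L0 M : Matrix (Fin n) (Fin n) ℂ)
    (lam mu eta : ℂ) (u : Fin n → ℂ) (v : Fin n ⊕ Fin n → ℂ) (w : Fin 2 → ℂ)
    (h1 : (eta • L2 + lam • L1 + L0 + mu • M) *ᵥ u = 0)
    (h2 : (eta • Lt2 L2 + lam • Lt1 L2 L1 + Lt0 L1 L0 + mu • Mt M) *ᵥ v = 0)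
    (h3 : (eta • C2 + lam • C1 + C0) *ᵥ w = 0) :
    Δ1 L2 L1 L0 M *ᵥ vecKron (vecKron u v) w
      = lam • (Δ0 L2 L1 L0 M *ᵥ vecKron (vecKron u v) w) := by
  have e1 : ∀ i, eta * (L2 *ᵥ u) i + lam * (L1 *ᵥ u) i + (L0 *ᵥ u) i
      + mu * (M *ᵥ u) i = 0 := by
    intro i
    have := congrFun h1 i
    simpa [Matrix.add_mulVec, Matrix.smul_mulVec] using this
  have e2 : ∀ j, eta * (Lt2 L2 *ᵥ v) j + lam * (Lt1 L2 L1 *ᵥ v) j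
      + (Lt0 L1 L0 *ᵥ v) j + mu * (Mt M *ᵥ v) j = 0 := by
    intro j
    have := congrFun h2 j
    simpa [Matrix.add_mulVec, Matrix.smul_mulVec] using this
  have e3 : ∀ k, eta * (C2 *ᵥ w) k + lam * (C1 *ᵥ w) k + (C0 *ᵥ w) k = 0 := by
    intro k
    have := congrFun h3 k
    simpa only [Matrix.add_mulVec, Matrix.smul_mulVec, Pi.add_apply, Pi.smul_apply, smul_eq_mul, Pi.zero_apply] using this
  unfold Δ1 Δ0
  simp only [Matrix.add_mulVec, Matrix.sub_mulVec, kron_mulVec]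
  ext ⟨⟨i, j⟩, k⟩
  simp only [Pi.add_apply, Pi.sub_apply, Pi.smul_apply, smul_eq_mul, vecKron]
  linear_combination ((L2 *ᵥ u) i * (Mt M *ᵥ v) j - (M *ᵥ u) i * (Lt2 L2 *ᵥ v) j) * e3 k
    + ((M *ᵥ u) i * e2 j - (Mt M *ᵥ v) j * e1 i) * (C2 *ᵥ w) k


end ZGV7
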